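/- Let σ be a G-positive script and let a, b be stable configurations with b = (a + σΔ)°. Then the total weight satisfies w(b) ≥ w(a). -/

import Mathlib

/-- A finite directed multigraph without loops on `Fin (n+1)` with global sink `Fin.last n`. -/
structure SinkDigraph (n : ℕ) where
  e : Fin (n + 1) → Fin (n + 1) → ℕ
  loopless : ∀ i, e i i = 0
  sink_no_out : ∀ j, e (Fin.last n) j = 0
  path_to_sink : ∀ i, Relation.ReflTransGen (fun u v => 0 < e u v) i (Fin.last n)

namespace SinkDigraph

variable {n : ℕ}

/-- Out-degree of a vertex. -/
def outDeg (G : SinkDigraph n) (i : Fin (n + 1)) : ℕ := ∑ j, G.e i j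

/-- The (full) Laplacian matrix over ℤ. -/
def lap (G : SinkDigraph n) : Matrix (Fin (n + 1)) (Fin (n + 1)) ℤ :=
  Matrix.of fun i j => if i = j then (G.outDeg i : ℤ) else -(G.e i j : ℤ)

/-- The reduced Laplacian (rows/columns of the sink removed). -/
def redLap (G : SinkDigraph n) : Matrix (Fin n) (Fin n) ℤ :=
  Matrix.of fun i j => G.lap i.castSucc j.castSucc

/-- The reduced Laplacian over ℚ. -/
def redLapQ (G : SinkDigraph n) : Matrix (Fin n) (Fin n) ℚ :=
  (G.redLap).map (Int.cast : ℤ → ℚ)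

/-- A ℕ-script viewed as integer vector. -/
def natScript (σ : Fin n → ℕ) : Fin n → ℤ := fun i => (σ i : ℤ)

/-- Result of firing vertex `i` in configuration `a`. -/
def fire (G : SinkDigraph n) (a : Fin n → ℤ) (i : Fin n) : Fin n → ℤ :=
  fun j => a j - G.redLap i j

/-- Result of firing a sequence of vertices. -/
def applySeq (G : SinkDigraph n) : (Fin n → ℤ) → List (Fin n) → (Fin n → ℤ)
  | a, [] => a
  | a, i :: s => G.applySeq (G.fire a i) s

/-- A firing sequence is legal from `a` if every fired vertex is active when fired. -/
def Legal (G : SinkDigraph n) : (Fin n → ℤ) → List (Fin n) → Prop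
  | _, [] => True
  | a, i :: s => G.redLap i i ≤ a i ∧ G.Legal (G.fire a i) s

/-- The firing script of a firing sequence. -/
def script (s : List (Fin n)) : Fin n → ℤ := fun i => (s.count i : ℤ)

/-- A configuration is stable if it is non-negative and no vertex is active. -/
def IsStable (G : SinkDigraph n) (a : Fin n → ℤ) : Prop :=
  ∀ i, 0 ≤ a i ∧ a i < G.redLap i i

/-- `b` is the stabilization of `a`. -/
def Stabilizes (G : SinkDigraph n) (a b : Fin n → ℤ) : Prop :=
  ∃ s : List (Fin n), G.Legal a s ∧ G.applySeq a s = b ∧ G.IsStable b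

/-- The maximal stable configuration `c_max`. -/
def cmax (G : SinkDigraph n) : Fin n → ℤ := fun i => (G.outDeg i.castSucc : ℤ) - 1

/-- A stable configuration is critical if it is the stabilization of `c_max + c`
for some non-negative `c`. -/
def IsCritical (G : SinkDigraph n) (a : Fin n → ℤ) : Prop :=
  ∃ c : Fin n → ℤ, 0 ≤ c ∧ G.Stabilizes (G.cmax + c) a

/-- `σΔ ≻ 0`, i.e. `σΔ` is non-negative and non-zero. -/
def GPositive (G : SinkDigraph n) (σ : Fin n → ℕ) : Prop :=
  0 ≤ Matrix.vecMul (natScript σ) G.redLap ∧ Matrix.vecMul (natScript σ) G.redLap ≠ 0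

/-- Reachability along directed edges. -/
def Reach (G : SinkDigraph n) : Fin (n + 1) → Fin (n + 1) → Prop :=
  Relation.ReflTransGen (fun u v => 0 < G.e u v)

/-- A source component: a strongly connected component with no in-going edge from outside. -/
def IsSourceComponent (G : SinkDigraph n) (S : Set (Fin (n + 1))) : Prop :=
  (∃ i, S = {j | G.Reach i j ∧ G.Reach j i}) ∧ ∀ j ∉ S, ∀ k ∈ S, G.e j k = 0

/-- A `G`-strongly positive script. -/
def GStronglyPositive (G : SinkDigraph n) (σ : Fin n → ℕ) : Prop :=
  G.GPositive σ ∧ ∀ S : Set (Fin (n + 1)), G.IsSourceComponent S →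
    ∃ i : Fin n, i.castSucc ∈ S ∧ Matrix.vecMul (natScript σ) G.redLap i ≠ 0

/-- Linear equivalence of configurations. -/
def Equiv (G : SinkDigraph n) (a b : Fin n → ℤ) : Prop :=
  ∃ σ : Fin n → ℤ, b - a = Matrix.vecMul σ G.redLap

/-- The weight of a configuration. -/
def weight (a : Fin n → ℤ) : ℤ := ∑ i, a i

/-- The energy (CFG) order: compare energy vectors `aΔ⁻¹` componentwise over ℚ. -/
def cfgLE (G : SinkDigraph n) (a b : Fin n → ℤ) : Prop :=
  Matrix.vecMul (fun i => (a i : ℚ)) (G.redLapQ)⁻¹ ≤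
    Matrix.vecMul (fun i => (b i : ℚ)) (G.redLapQ)⁻¹

/-- A non-negative configuration is superstable if reverse-firing any nonzero ℕ-script
produces a negative component. -/
def IsSuperstable (G : SinkDigraph n) (a : Fin n → ℤ) : Prop :=
  0 ≤ a ∧ ∀ σ : Fin n → ℕ, σ ≠ 0 →
    ∃ i, a i - Matrix.vecMul (natScript σ) G.redLap i < 0

end SinkDigraph

open SinkDigraph Matrix

namespace SinkDigraph

variable {n : ℕ} (G : SinkDigraph n)

lemma redLap_diag (i : Fin n) : G.redLap i i = (G.outDeg i.castSucc : ℤ) := by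
  simp [redLap, lap]

lemma redLap_off (i j : Fin n) (h : i ≠ j) : G.redLap i j = -(G.e i.castSucc j.castSucc : ℤ) := by
  simp [redLap, lap, Fin.castSucc_inj, h]

lemma redLap_eq (i j : Fin n) :
    G.redLap i j = (if i = j then (G.outDeg i.castSucc : ℤ) else 0) - (G.e i.castSucc j.castSucc : ℤ) := by
  rcases eq_or_ne i j with rfl | h
  · simp [redLap_diag, G.loopless]
  · simp [redLap_off, h]

lemma redLap_rowsum (i : Fin n) :
    ∑ j, G.redLap i j = (G.e i.castSucc (Fin.last n) : ℤ) := by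
  simp only [redLap_eq, Finset.sum_sub_distrib, Finset.sum_ite_eq, Finset.mem_univ, if_true]
  have : (G.outDeg i.castSucc : ℤ) = ∑ j : Fin (n + 1), (G.e i.castSucc j : ℤ) := by
    simp [outDeg]
  rw [this, Fin.sum_univ_castSucc]
  ring

lemma vecMul_apply (v : Fin n → ℤ) (j : Fin n) :
    Matrix.vecMul v G.redLap j = ∑ k, v k * G.redLap k j := by
  simp [Matrix.vecMul, dotProduct]

lemma applySeq_eq (s : List (Fin n)) : ∀ a : Fin n → ℤ,
    G.applySeq a s = fun j => a j - Matrix.vecMul (script s) G.redLap j := by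
  induction s with
  | nil =>
    intro a; funext j
    simp [applySeq, script, vecMul_apply]
  | cons i s ih =>
    intro a; funext j
    simp only [applySeq, ih, fire]
    have h1 : Matrix.vecMul (script (i :: s)) G.redLap j
        = Matrix.vecMul (script s) G.redLap j + G.redLap i j := by
      rw [vecMul_apply, vecMul_apply]
      have h2 : ∀ k : Fin n, script (i :: s) k * G.redLap k j
          = script s k * G.redLap k j + (if k = i then G.redLap k j else 0) := by
        intro k
        rcases eq_or_ne k i with rfl | h
        · simp [script, List.count_cons, add_mul]
        · simp [script, List.count_cons, h, Ne.symm h]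
      simp only [h2, Finset.sum_add_distrib, Finset.sum_ite_eq', Finset.mem_univ, if_true]
    rw [h1]; ring

lemma least_action : ∀ (s : List (Fin n)) (x τ : Fin n → ℤ), 0 ≤ τ →
    G.Legal x s → G.IsStable (fun j => x j - Matrix.vecMul τ G.redLap j) →
    ∀ i, (script s) i ≤ τ i := by
  intro s
  induction s with
  | nil => intro x τ hτ _ _ i; simpa [script] using hτ i
  | cons i s ih =>
    intro x τ hτ hleg hst
    obtain ⟨hfi, hleg'⟩ := hleg
    have hτi : 1 ≤ τ i := by
      by_contra h
      push_neg at h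
      have hτi0 : τ i = 0 := le_antisymm (by omega) (hτ i)
      have hsum : Matrix.vecMul τ G.redLap i ≤ 0 := by
        rw [vecMul_apply]
        apply Finset.sum_nonpos
        intro k _
        rcases eq_or_ne k i with rfl | hk
        · simp [hτi0]
        · have hle : G.redLap k i ≤ 0 := by
            rw [redLap_off G k i hk]
            exact neg_nonpos.mpr (by positivity)
          exact mul_nonpos_of_nonneg_of_nonpos (hτ k) hle
      have h2 := (hst i).2
      simp only at h2
      linarith
    set τ' : Fin n → ℤ := fun k => τ k - if k = i then 1 else 0 with hτ'
    have hτ'nn : 0 ≤ τ' := by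
      intro k
      rcases eq_or_ne k i with rfl | hk
      · simp [hτ']; omega
      · simpa [hτ', hk] using hτ k
    have hvm : ∀ j, Matrix.vecMul τ' G.redLap j
        = Matrix.vecMul τ G.redLap j - G.redLap i j := by
      intro j
      rw [vecMul_apply, vecMul_apply]
      have : ∀ k : Fin n, τ' k * G.redLap k j
          = τ k * G.redLap k j - (if k = i then G.redLap k j else 0) := by
        intro k; rcases eq_or_ne k i with rfl | h
        · simp [hτ']; ring
        · simp [hτ', h]
      simp only [this, Finset.sum_sub_distrib, Finset.sum_ite_eq', Finset.mem_univ, if_true]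
    have hst' : G.IsStable (fun j => (G.fire x i) j - Matrix.vecMul τ' G.redLap j) := by
      intro j
      have := hst j
      simpa [fire, hvm, sub_sub_eq_add_sub, sub_add_eq_sub_sub] using this
    have hrec := ih (G.fire x i) τ' hτ'nn hleg' hst'
    intro k
    have := hrec k
    simp only [script, List.count_cons, hτ'] at this ⊢
    rcases eq_or_ne k i with rfl | hk
    · simp at this ⊢; omega
    · simp [hk, Ne.symm hk] at this ⊢; omega

end SinkDigraph

theorem weight_nondecreasing (n : ℕ) (G : SinkDigraph n) (σ : Fin n → ℕ)
    (hσ : G.GPositive σ) (a b : Fin n → ℤ) (ha : G.IsStable a)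
    (hb : G.Stabilizes (a + Matrix.vecMul (natScript σ) G.redLap) b) :
    weight a ≤ weight b := by
  obtain ⟨s, hleg, happ, hbst⟩ := hb
  set c : Fin n → ℤ := script s with hc
  have hcnn : 0 ≤ c := by intro i; simp [hc, script]
  -- least action: c ≤ natScript σ
  have hcle : ∀ i, c i ≤ natScript σ i := by
    apply G.least_action s (a + Matrix.vecMul (natScript σ) G.redLap) (natScript σ)
    · intro i; simp [natScript]
    · exact hleg
    · have : (fun j => (a + Matrix.vecMul (natScript σ) G.redLap) j
          - Matrix.vecMul (natScript σ) G.redLap j) = a := by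
        funext j; simp
      rw [this]; exact ha
  -- b = a + σΔ - cΔ
  have hbeq : ∀ j, b j = a j + Matrix.vecMul (natScript σ) G.redLap j
      - Matrix.vecMul c G.redLap j := by
    intro j
    rw [← happ, G.applySeq_eq]
    simp [hc]
  have key : weight b - weight a
      = ∑ i, (natScript σ i - c i) * (G.e i.castSucc (Fin.last n) : ℤ) := by
    unfold weight
    rw [← Finset.sum_sub_distrib]
    have : ∀ j, b j - a j = ∑ i, (natScript σ i - c i) * G.redLap i j := by
      intro j
      rw [hbeq j, G.vecMul_apply, G.vecMul_apply]
      simp only [sub_mul, Finset.sum_sub_distrib]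
      ring
    simp only [this]
    rw [Finset.sum_comm]
    congr 1; funext i
    rw [← Finset.mul_sum, G.redLap_rowsum]
  have : 0 ≤ weight b - weight a := by
    rw [key]
    apply Finset.sum_nonneg
    intro i _
    have h1 : 0 ≤ natScript σ i - c i := by linarith [hcle i]
    positivity
  linarith
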